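/- For any finite simplicial complex K, n ≥ 2, and r ≥ 0, one has SC^{Σ,r}_n(K) ≥ SC^{Σ,r+1}_n(K); i.e., the sequence of symmetric simplicial complexities is non-increasing in the subdivision index r. -/

import Mathlib

noncomputable section
open scoped ENat
attribute [local instance] Classical.propDecidable

universe u v

/-! ### The wedge `I_n` of `n` unit intervals glued at `0` -/

def wedgeSetoid (n : ℕ) : Setoid (Fin n × unitInterval) where
  r p q := p = q ∨ (p.2 = 0 ∧ q.2 = 0)
  iseqv := by
    refine ⟨fun _ => Or.inl rfl, ?_, ?_⟩
    · rintro p q (rfl | ⟨h1, h2⟩)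
      · exact Or.inl rfl
      · exact Or.inr ⟨h2, h1⟩
    · rintro p q s (rfl | ⟨h1, h2⟩) h
      · exact h
      · rcases h with rfl | ⟨h3, h4⟩
        · exact Or.inr ⟨h1, h2⟩
        · exact Or.inr ⟨h1, h4⟩

def WedgeI (n : ℕ) : Type := Quotient (wedgeSetoid n)

instance (n : ℕ) : TopologicalSpace (WedgeI n) := by unfold WedgeI; infer_instance

/-- the point `t_j` on the `j`-th arm of `I_n`. -/
def arm (n : ℕ) (j : Fin n) (t : unitInterval) : WedgeI n :=
  Quotient.mk (wedgeSetoid n) (j, t)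

/-- The `n`-th symmetric topological complexity `TC^Σ_n(X)`:  the equivariant sectional
category of the fibration `e_n : X^{I_n} → X^n`. -/
def TCSigma (n : ℕ) (X : Type v) [TopologicalSpace X] : ℕ∞ :=
  sInf {k : ℕ∞ | ∃ k0 : ℕ, k = (k0 : ℕ∞) ∧
    ∃ U : Fin k0 → Set (Fin n → X),
      (∀ i, IsOpen (U i)) ∧
      (∀ x, ∃ i, x ∈ U i) ∧
      (∀ i (g : Equiv.Perm (Fin n)), ∀ x ∈ U i, (fun j => x (g j)) ∈ U i) ∧
      ∀ i, ∃ s : C(↥(U i), C(WedgeI n, X)),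
        (∀ (x : ↥(U i)) (j : Fin n), (s x) (arm n j 1) = x.1 j) ∧
        ∀ (g : Equiv.Perm (Fin n)) (x : Fin n → X) (hx : x ∈ U i)
          (hgx : (fun j => x (g j)) ∈ U i) (t : unitInterval) (j : Fin n),
          (s ⟨fun j => x (g j), hgx⟩) (arm n j t) = (s ⟨x, hx⟩) (arm n (g j) t)}

/-! ### Abstract simplicial complexes, simplicial maps and contiguity -/

structure ASC (V : Type u) where
  faces : Set (Finset V)
  nonempty_of_mem : ∀ {σ : Finset V}, σ ∈ faces → σ.Nonempty
  down_closed : ∀ {σ τ : Finset V}, σ ∈ faces → τ ⊆ σ → τ.Nonempty → τ ∈ faces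

def IsSimplicialMap {V : Type u} {W : Type v} (K : ASC V) (L : ASC W) (f : V → W) : Prop :=
  ∀ σ ∈ K.faces, σ.image f ∈ L.faces

/-- one-step contiguity (of simplicial maps). -/
def OneCont {V : Type u} {W : Type v} (K : ASC V) (L : ASC W) (f g : V → W) : Prop :=
  IsSimplicialMap K L f ∧ IsSimplicialMap K L g ∧
    ∀ σ ∈ K.faces, σ.image f ∪ σ.image g ∈ L.faces

/-- `c`-contiguity. -/
def Contig {V : Type u} {W : Type v} (K : ASC V) (L : ASC W) (c : ℕ) (f g : V → W) : Prop :=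
  ∃ φ : ℕ → V → W, φ 0 = f ∧ φ c = g ∧ ∀ i < c, OneCont K L (φ i) (φ (i + 1))

/-- `v` is a vertex of `K`. -/
def vertexOf {V : Type u} (K : ASC V) (v : V) : Prop := {v} ∈ K.faces

/-- Symmetric contiguity of the family `f_1, …, f_n : K → L` relative to an action `act` of
`Σ_n` on the vertices of `K`. -/
def SymContiguousOn {V : Type u} {W : Type v} (n : ℕ) (act : Equiv.Perm (Fin n) → V → V)
    (K : ASC V) (L : ASC W) (f : Fin n → V → W) : Prop :=
  (∀ (j : Fin n) (g : Equiv.Perm (Fin n)) (v : V), vertexOf K v → f j (act g v) = f (g j) v) ∧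
  ∃ (c : ℕ) (φ : Fin n → ℕ → V → W), 0 < c ∧
    (∀ j j', φ j 0 = φ j' 0) ∧
    (∀ (j : Fin n) (g : Equiv.Perm (Fin n)) (v : V), vertexOf K v → φ j 0 (act g v) = φ j 0 v) ∧
    (∀ j, φ j c = f j) ∧
    (∀ j l, l < c → OneCont K L (φ j l) (φ j (l + 1))) ∧
    (∀ (j : Fin n) (l : ℕ) (g : Equiv.Perm (Fin n)) (v : V),
      vertexOf K v → l ≤ c → φ j l (act g v) = φ (g j) l v)
/-! ### Geometric realization -/

def ASC.realization {V : Type u} [Fintype V] (K : ASC V) : Set (V → ℝ) :=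
  {α | (∀ v, 0 ≤ α v) ∧ (∑ v, α v) = 1 ∧ ∃ σ ∈ K.faces, ∀ v, α v ≠ 0 → v ∈ σ}

/-- the open star of a vertex in the realization. -/
def ASC.star {V : Type u} [Fintype V] (K : ASC V) (v : V) : Set (V → ℝ) :=
  {α | α ∈ K.realization ∧ α v ≠ 0}

/-- realization of a vertex map (pushforward of weights). -/
def realizeMap {V : Type u} {W : Type v} [Fintype V] (f : V → W) (α : V → ℝ) : W → ℝ :=
  fun w => ∑ v ∈ Finset.univ.filter (fun v => f v = w), α v

/-! ### Barycentric subdivision of a simplicial complex -/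

/-- the barycentric subdivision: vertices are the simplices of `K`, simplices are chains. -/
def sdC {W : Type u} (K : ASC W) : ASC (Finset W) where
  faces := {c | c.Nonempty ∧ (∀ σ ∈ c, σ ∈ K.faces) ∧ IsChain (· ⊆ ·) (c : Set (Finset W))}
  nonempty_of_mem h := h.1
  down_closed := by
    intro σ τ hσ hsub hne
    exact ⟨hne, fun x hx => hσ.2.1 x (hsub hx), hσ.2.2.mono (Finset.coe_subset.mpr hsub)⟩

/-- the canonical linear map `|sd K| → |K|` sending the vertex `σ` to the barycenter of `σ`. -/
def stepReal (W : Type u) [Fintype W] (β : Finset W → ℝ) : W → ℝ :=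
  fun w => ∑ σ : Finset W, β σ * (if w ∈ σ then ((σ.card : ℝ))⁻¹ else 0)

/-! ### Order complexes, products, lower-set (Alexandrov) topologies -/

/-- the order complex of a poset: simplices are finite nonempty chains. -/
def OC (P : Type u) [Preorder P] : ASC P where
  faces := {σ | σ.Nonempty ∧ IsChain (· ≤ ·) (σ : Set P)}
  nonempty_of_mem h := h.1
  down_closed := by
    intro σ τ hσ hsub hne
    exact ⟨hne, hσ.2.mono (Finset.coe_subset.mpr hsub)⟩

/-- the `n`-fold ordered cartesian product `K^n` of an ordered simplicial complex. -/
def powC {V : Type u} [PartialOrder V] (K : ASC V) (n : ℕ) : ASC (Fin n → V) where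
  faces := {S | S.Nonempty ∧ IsChain (· ≤ ·) (S : Set (Fin n → V)) ∧
    ∀ j, S.image (fun x => x j) ∈ K.faces}
  nonempty_of_mem h := h.1
  down_closed := by
    intro S T hS hsub hne
    refine ⟨hne, hS.2.1.mono (Finset.coe_subset.mpr hsub), fun j => ?_⟩
    exact K.down_closed (hS.2.2 j) (Finset.image_subset_image hsub) (hne.image _)

/-- The Alexandrov topology associated to a relation: open sets are the down-sets. -/
def lowTop (α : Type u) (le : α → α → Prop) : TopologicalSpace α where
  IsOpen U := ∀ a ∈ U, ∀ b, le b a → b ∈ U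
  isOpen_univ := fun _ _ _ _ => trivial
  isOpen_inter := fun U V hU hV a ha b hb => ⟨hU a ha.1 b hb, hV a ha.2 b hb⟩
  isOpen_sUnion := by
    intro S hS a ha b hb
    obtain ⟨U, hUS, haU⟩ := ha
    exact ⟨U, hUS, hS U hUS a haU b hb⟩

/-- product topology, with an explicitly given topology on the first factor. -/
def prodTop (P : Type u) (lp : TopologicalSpace P) (Y : Type v) [ty : TopologicalSpace Y] :
    TopologicalSpace (P × Y) := @instTopologicalSpaceProd P Y lp ty
/-! ### The finite "wedge of fences" poset `J_{n,m}` -/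

/-- `J_{n,m}`: `none` is the common basepoint `0`, `some (j, i)` is the point `(i+1)_j`
on the `j`-th fence. -/
abbrev JP (n m : ℕ) : Type := Option (Fin n × Fin m)

/-- the zigzag (fence) order on values `0,1,2,…`:  `e ≤ o` when `e` is even, `o` odd and
they are adjacent. -/
def fLE (a b : ℕ) : Prop := a = b ∨ (a % 2 = 0 ∧ b % 2 = 1 ∧ (b = a + 1 ∨ a = b + 1))

/-- the order relation on `J_{n,m}`. -/
def JLE {n m : ℕ} : JP n m → JP n m → Prop
  | none, none => True
  | none, some q => fLE 0 (q.2.1 + 1)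
  | some p, none => fLE (p.2.1 + 1) 0
  | some p, some q => p.1 = q.1 ∧ fLE (p.2.1 + 1) (q.2.1 + 1)

/-- the end point `m_j` of the `j`-th fence. -/
def endPt (n m : ℕ) (j : Fin n) : JP n m :=
  if h : 0 < m then some (j, ⟨m - 1, by omega⟩) else none

/-- the action of `Σ_n` on `J_{n,m}` permuting the fences. -/
def jAct {n m : ℕ} (g : Equiv.Perm (Fin n)) : JP n m → JP n m :=
  Option.map (fun p => (g p.1, p.2))

/-- order-preserving maps out of `J_{n,m}`. -/
def JMono {n m : ℕ} {P : Type u} [Preorder P] (γ : JP n m → P) : Prop :=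
  ∀ a b, JLE a b → γ a ≤ γ b

/-! ### Iterated barycentric subdivisions (concrete model) -/

/-- `SdT V r` is the `r`-fold iterated `Finset` of `V`: the potential vertices of the `r`-fold
barycentric subdivision. -/
def SdT (V : Type u) : ℕ → Type u
  | 0 => V
  | r + 1 => Finset (SdT V r)

/-- the order on `SdT`: the given relation at level `0`, inclusion at higher levels. -/
def SdLE (V : Type u) (le0 : V → V → Prop) : (r : ℕ) → SdT V r → SdT V r → Prop
  | 0 => le0
  | r + 1 => fun (a b : Finset (SdT V r)) => a ⊆ b

/-- elements of `SdT V r` which are genuine iterated chains, i.e. points of `sd^r`. -/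
def SdOK (V : Type u) (le0 : V → V → Prop) : (r : ℕ) → SdT V r → Prop
  | 0 => fun _ => True
  | r + 1 => fun (c : Finset (SdT V r)) =>
      c.Nonempty ∧ (∀ x ∈ c, SdOK V le0 r x) ∧
      ∀ x ∈ c, ∀ y ∈ c, SdLE V le0 r x y ∨ SdLE V le0 r y x

/-- functorial lift of a self map to iterated subdivisions. -/
def SdMap (V : Type u) (f : V → V) : (r : ℕ) → SdT V r → SdT V r
  | 0 => f
  | r + 1 => fun (c : Finset (SdT V r)) => c.image (SdMap V f r)

instance sdNonempty (V : Type u) [Nonempty V] : ∀ r, Nonempty (SdT V r)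
  | 0 => ‹Nonempty V›
  | r + 1 => ⟨(∅ : Finset (SdT V r))⟩

instance sdFintype (V : Type u) [Fintype V] : ∀ r, Fintype (SdT V r)
  | 0 => ‹Fintype V›
  | r + 1 => letI := sdFintype V r; inferInstanceAs (Fintype (Finset (SdT V r)))

/-- the greatest element of a finite set w.r.t. a relation (junk value if there is none). -/
def grIn {α : Type u} [Nonempty α] (le : α → α → Prop) (c : Finset α) : α :=
  if h : ∃ x, x ∈ c ∧ ∀ y ∈ c, le y x then h.choose else Classical.arbitrary α

/-- the iterated "last element" map `τ^r : sd^r(P) → P`. -/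
def SdTau (V : Type u) [Nonempty V] (le0 : V → V → Prop) : (r : ℕ) → SdT V r → V
  | 0 => fun x => x
  | r + 1 => fun (c : Finset (SdT V r)) => SdTau V le0 r (grIn (SdLE V le0 r) c)

/-- the permutation action on `P^n`. -/
def pAct {X : Type u} {n : ℕ} (g : Equiv.Perm (Fin n)) (x : Fin n → X) : Fin n → X :=
  fun j => x (g j)

/-- open subsets of `sd^r` (in its Alexandrov topology), as sets of iterated chains. -/
def SdOpen (X : Type u) (le0 : X → X → Prop) (r : ℕ) (U : Set (SdT X r)) : Prop :=
  (∀ x ∈ U, SdOK X le0 r x) ∧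
  ∀ a ∈ U, ∀ b, SdOK X le0 r b → SdLE X le0 r b a → b ∈ U

/-! ### Higher symmetric combinatorial complexity -/

/-- `CC^{Σ,r}_{n,m}(P) ≤ k`. -/
def CCle (P : Type u) [PartialOrder P] [Nonempty P] (n m r k : ℕ) : Prop :=
  ∃ U : Fin k → Set (SdT (Fin n → P) r),
    (∀ i, SdOpen (Fin n → P) (· ≤ ·) r (U i)) ∧
    (∀ x, SdOK (Fin n → P) (· ≤ ·) r x → ∃ i, x ∈ U i) ∧
    (∀ i (g : Equiv.Perm (Fin n)), ∀ x ∈ U i, SdMap (Fin n → P) (pAct g) r x ∈ U i) ∧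
    (∀ i, ∃ s : SdT (Fin n → P) r → JP n m → P,
      (∀ x ∈ U i, JMono (s x)) ∧
      (∀ x ∈ U i, ∀ y ∈ U i, SdLE (Fin n → P) (· ≤ ·) r x y → ∀ t, s x t ≤ s y t) ∧
      (∀ (g : Equiv.Perm (Fin n)), ∀ x ∈ U i, ∀ t, s (SdMap (Fin n → P) (pAct g) r x) t = s x (jAct g t)) ∧
      (∀ x ∈ U i, ∀ j : Fin n, s x (endPt n m j) = SdTau (Fin n → P) (· ≤ ·) r x j))

/-- the value `CC^{Σ,r}_{n,m}(P)` (`∞` if there is no such cover). -/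
def CCnm (P : Type u) [PartialOrder P] [Nonempty P] (n m r : ℕ) : ℕ∞ :=
  sInf {k : ℕ∞ | ∃ k0 : ℕ, k = (k0 : ℕ∞) ∧ CCle P n m r k0}

/-- the stable value `CC^{Σ,r}_n(P)` (minimum over all fence lengths `m`). -/
def CCr (P : Type u) [PartialOrder P] [Nonempty P] (n r : ℕ) : ℕ∞ :=
  sInf {k : ℕ∞ | ∃ k0 m : ℕ, k = (k0 : ℕ∞) ∧ CCle P n m r k0}
/-! ### Iterated barycentric subdivision of a simplicial complex, and `SC^{Σ,r}_n` -/

/-- the `r`-fold barycentric subdivision `sd^r(K)`. -/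
def CIter {V : Type u} (K : ASC V) : (r : ℕ) → ASC (SdT V r)
  | 0 => K
  | r + 1 => sdC (CIter K r)

/-- the iterated linear map `|sd^r K| → |K|`. -/
def iterReal (V : Type u) [Fintype V] : (r : ℕ) → (SdT V r → ℝ) → (V → ℝ)
  | 0 => fun α => α
  | r + 1 => fun (β : Finset (SdT V r) → ℝ) => iterReal V r (stepReal (SdT V r) β)

/-- composition of the chosen one-step approximations `ι : sd^{s+1} → sd^s`, giving
`ι^r : sd^r(K^n) → K^n`. -/
def compIota {V' : Type u} (ιs : (s : ℕ) → Finset (SdT V' s) → SdT V' s) :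
    (r : ℕ) → SdT V' r → V'
  | 0 => fun x => x
  | r + 1 => fun (x : Finset (SdT V' r)) => compIota ιs r (ιs r x)

/-- the family `ιs` consists, up to level `r`, of `Σ_n`-equivariant simplicial approximations
of the identity of `|K^n|`. -/
def GoodIota {V : Type u} [Fintype V] [PartialOrder V] (K : ASC V) (n r : ℕ)
    (ιs : (s : ℕ) → Finset (SdT (Fin n → V) s) → SdT (Fin n → V) s) : Prop :=
  ∀ s, s < r →
    IsSimplicialMap (CIter (powC K n) (s + 1)) (CIter (powC K n) s) (ιs s) ∧
    (∀ (v : SdT (Fin n → V) (s + 1)), ∀ α ∈ (CIter (powC K n) (s + 1)).star v,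
      stepReal (SdT (Fin n → V) s) α ∈ (CIter (powC K n) s).star (ιs s v)) ∧
    (∀ (g : Equiv.Perm (Fin n)) (σ : SdT (Fin n → V) (s + 1)),
      ιs s (SdMap (Fin n → V) (pAct g) (s + 1) σ) = SdMap (Fin n → V) (pAct g) s (ιs s σ))

/-- `SC^{Σ,r}_n(K) ≤ k` (with respect to the chosen approximations `ιs`). -/
def SCle {V : Type u} [Fintype V] [PartialOrder V] (K : ASC V) (n r : ℕ)
    (ιs : (s : ℕ) → Finset (SdT (Fin n → V) s) → SdT (Fin n → V) s) (k : ℕ) : Prop :=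
  ∃ L : Fin k → ASC (SdT (Fin n → V) r),
    (∀ i, (L i).faces ⊆ (CIter (powC K n) r).faces) ∧
    (∀ σ ∈ (CIter (powC K n) r).faces, ∃ i, σ ∈ (L i).faces) ∧
    (∀ i (g : Equiv.Perm (Fin n)), ∀ σ ∈ (L i).faces,
      σ.image (SdMap (Fin n → V) (pAct g) r) ∈ (L i).faces) ∧
    (∀ i, SymContiguousOn n (fun g => SdMap (Fin n → V) (pAct g) r) (L i) K
      (fun j x => compIota ιs r x j))

/-- the value `SC^{Σ,r}_n(K)` with respect to the chosen approximations `ιs`. -/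
def SCval {V : Type u} [Fintype V] [PartialOrder V] (K : ASC V) (n r : ℕ)
    (ιs : (s : ℕ) → Finset (SdT (Fin n → V) s) → SdT (Fin n → V) s) : ℕ∞ :=
  sInf {k : ℕ∞ | ∃ k0 : ℕ, k = (k0 : ℕ∞) ∧ SCle K n r ιs k0}

/-- instance-free version: if `K0`'s faces are closed under taking the image of `f`
(phrased via a membership specification), then so are the faces of every iterated
barycentric subdivision under `SdMap`. -/
lemma sdMap_faces_aux {V : Type u} (K0 : ASC V) (f : V → V)
    (hf : ∀ σ ∈ K0.faces, ∀ τ : Finset V, (∀ w, w ∈ τ ↔ ∃ v ∈ σ, f v = w) → τ ∈ K0.faces) :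
    ∀ r, ∀ σ ∈ (CIter K0 r).faces, ∀ τ : Finset (SdT V r),
      (∀ w, w ∈ τ ↔ ∃ v ∈ σ, SdMap V f r v = w) → τ ∈ (CIter K0 r).faces := by
  intro r
  induction r with
  | zero => exact hf
  | succ r ih =>
    intro σ hσ τ hτ
    obtain ⟨hne, hmem, hchain⟩ := hσ
    obtain ⟨v0, hv0⟩ := hne
    refine ⟨⟨SdMap V f (r + 1) v0, (hτ _).mpr ⟨v0, hv0, rfl⟩⟩, ?_, ?_⟩
    · intro x hx
      obtain ⟨v, hv, rfl⟩ := (hτ x).mp hx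
      exact ih v (hmem v hv) _ (fun w => Finset.mem_image)
    · intro x hx y hy hxy
      obtain ⟨u, hu, rfl⟩ := (hτ x).mp hx
      obtain ⟨v, hv, rfl⟩ := (hτ y).mp hy
      rcases eq_or_ne u v with rfl | hne'
      · exact Or.inl (subset_refl _)
      · rcases hchain hu hv hne' with h | h
        · left
          intro w hw
          obtain ⟨a, ha, rfl⟩ := Finset.mem_image.mp hw
          exact Finset.mem_image.mpr ⟨a, h ha, rfl⟩
        · right
          intro w hw
          obtain ⟨a, ha, rfl⟩ := Finset.mem_image.mp hw
          exact Finset.mem_image.mpr ⟨a, h ha, rfl⟩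

lemma pAct_faces_aux {V : Type u} [PartialOrder V] (K : ASC V) (n : ℕ)
    (g : Equiv.Perm (Fin n)) :
    ∀ S ∈ (powC K n).faces, ∀ T : Finset (Fin n → V),
      (∀ w, w ∈ T ↔ ∃ x ∈ S, pAct g x = w) → T ∈ (powC K n).faces := by
  intro S hS T hT
  obtain ⟨hne, hchain, hj⟩ := hS
  obtain ⟨x0, hx0⟩ := hne
  refine ⟨⟨pAct g x0, (hT _).mpr ⟨x0, hx0, rfl⟩⟩, ?_, ?_⟩
  · intro x hx y hy hxy
    obtain ⟨u, hu, rfl⟩ := (hT x).mp hx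
    obtain ⟨v, hv, rfl⟩ := (hT y).mp hy
    have huv : u ≤ v ∨ v ≤ u := by
      rcases eq_or_ne u v with rfl | hne'
      · exact Or.inl le_rfl
      · exact (hchain hu hv hne').imp id id
    exact huv.imp (fun h j => h (g j)) (fun h j => h (g j))
  · intro j
    have h2 : T.image (fun x => x j) = S.image (fun x => x (g j)) := by
      ext w
      simp only [Finset.mem_image]
      constructor
      · rintro ⟨x, hx, rfl⟩
        obtain ⟨u, hu, rfl⟩ := (hT x).mp hx
        exact ⟨u, hu, rfl⟩
      · rintro ⟨u, hu, rfl⟩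
        exact ⟨pAct g u, (hT _).mpr ⟨u, hu, rfl⟩, rfl⟩
    rw [h2]
    exact hj (g j)

/-- `SC^{Σ,r}_n(K) ≥ SC^{Σ,r+1}_n(K)`: the symmetric simplicial complexities
are non-increasing in the subdivision index `r`. -/
theorem statement8 {V : Type*} [Fintype V] [PartialOrder V] (K : ASC V)
    (hord : ∀ σ ∈ K.faces, IsChain (· ≤ ·) (σ : Set V))
    (n r : ℕ) (hn : 2 ≤ n)
    (ιs : (s : ℕ) → Finset (SdT (Fin n → V) s) → SdT (Fin n → V) s)
    (hι : GoodIota K n (r + 1) ιs) :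
    SCval K n (r + 1) ιs ≤ SCval K n r ιs := by
  have key : ∀ k : ℕ, SCle K n r ιs k → SCle K n (r + 1) ιs k := by
    rintro k ⟨L, hsub, hcov, hequiv, hcont⟩
    obtain ⟨hmap, -, heq⟩ := hι r (Nat.lt_succ_self r)
    refine ⟨fun i => ⟨{σ | σ ∈ (CIter (powC K n) (r + 1)).faces ∧
        σ.image (ιs r) ∈ (L i).faces},
      fun h => (CIter (powC K n) (r + 1)).nonempty_of_mem h.1, ?_⟩, ?_, ?_, ?_, ?_⟩
    · intro σ τ hσ hsub' hne
      refine ⟨(CIter (powC K n) (r + 1)).down_closed hσ.1 hsub' hne, ?_⟩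
      refine (L i).down_closed hσ.2 ?_ (hne.image (ιs r))
      intro w hw
      obtain ⟨x, hx, rfl⟩ := Finset.mem_image.mp hw
      exact Finset.mem_image.mpr ⟨x, hsub' hx, rfl⟩
    · exact fun i σ h => h.1
    · intro σ hσ
      obtain ⟨i, hi⟩ := hcov _ (hmap σ hσ)
      exact ⟨i, hσ, hi⟩
    · intro i g σ hσ
      constructor
      · exact sdMap_faces_aux (powC K n) (pAct g)
          (fun S hS T hT => pAct_faces_aux K n g S hS T hT) (r + 1) σ hσ.1 _
          (fun w => Finset.mem_image)
      · have h2 : (σ.image (SdMap (Fin n → V) (pAct g) (r + 1))).image (ιs r)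
            = (σ.image (ιs r)).image (SdMap (Fin n → V) (pAct g) r) := by
          ext w
          simp only [Finset.mem_image]
          constructor
          · intro hw
            obtain ⟨y, hy, rfl⟩ := Finset.mem_image.mp hw
            obtain ⟨x, hx, rfl⟩ := (@Finset.mem_image _ _ (fun a b => Classical.propDecidable (a = b)) _ _ _).mp hy
            exact ⟨ιs r x, Finset.mem_image.mpr ⟨x, hx, rfl⟩, (heq g x).symm⟩
          · rintro ⟨y, hy, rfl⟩
            obtain ⟨x, hx, rfl⟩ := Finset.mem_image.mp hy
            exact Finset.mem_image.mpr ⟨SdMap (Fin n → V) (pAct g) (r + 1) x, (@Finset.mem_image _ _ (fun a b => Classical.propDecidable (a = b)) _ _ _).mpr ⟨x, hx, rfl⟩, heq g x⟩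
        rw [h2]
        exact hequiv i g _ hσ.2
    · intro i
      obtain ⟨hsym, c, φ, hc, h0eq, h0inv, hend, hstep, hlast⟩ := hcont i
      have hvert : ∀ v : SdT (Fin n → V) (r + 1),
          ({v} : Finset (SdT (Fin n → V) (r + 1))).image (ιs r) ∈ (L i).faces →
          vertexOf (L i) (ιs r v) := by
        intro v hv
        exact (congrArg (· ∈ (L i).faces) (Finset.image_singleton (f := ιs r) (a := v))).mp hv
      constructor
      · intro j g v hv
        show compIota ιs r (ιs r (SdMap (Fin n → V) (pAct g) (r + 1) v)) j
            = compIota ιs r (ιs r v) (g j)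
        rw [heq g v]
        exact hsym j g (ιs r v) (hvert v hv.2)
      · refine ⟨c, fun j l x => φ j l (ιs r x), hc, ?_, ?_, ?_, ?_, ?_⟩
        · intro j j'
          funext x
          exact congrFun (h0eq j j') (ιs r x)
        · intro j g v hv
          show φ j 0 (ιs r (SdMap (Fin n → V) (pAct g) (r + 1) v)) = φ j 0 (ιs r v)
          rw [heq g v]
          exact h0inv j g (ιs r v) (hvert v hv.2)
        · intro j
          funext x
          exact congrFun (hend j) (ιs r x)
        · intro j l hl
          obtain ⟨hf, hg, hu⟩ := hstep j l hl
          have key2 : ∀ (l' : ℕ) (σ : Finset (SdT (Fin n → V) (r + 1))),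
              σ.image ((fun (j : Fin n) (l : ℕ) (x : SdT (Fin n → V) (r + 1)) =>
                φ j l (ιs r x)) j l')
              = (σ.image (ιs r)).image (φ j l') := by
            intro l' σ
            ext w
            simp only [Finset.mem_image]
            constructor
            · rintro ⟨x, hx, rfl⟩
              exact ⟨ιs r x, Finset.mem_image.mpr ⟨x, hx, rfl⟩, rfl⟩
            · rintro ⟨y, hy, rfl⟩
              obtain ⟨x, hx, rfl⟩ := Finset.mem_image.mp hy
              exact ⟨x, hx, rfl⟩
          refine ⟨?_, ?_, ?_⟩
          · intro σ hσ
            rw [key2]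
            exact hf _ hσ.2
          · intro σ hσ
            rw [key2]
            exact hg _ hσ.2
          · intro σ hσ
            rw [key2, key2]
            exact hu _ hσ.2
        · intro j l g v hv hlc
          show φ j l (ιs r (SdMap (Fin n → V) (pAct g) (r + 1) v)) = φ (g j) l (ιs r v)
          rw [heq g v]
          exact hlast j l g (ιs r v) (hvert v hv.2) hlc
  refine sInf_le_sInf ?_
  rintro k ⟨k0, rfl, hk⟩
  exact ⟨k0, rfl, key k0 hk⟩
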